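/- For real numbers a > b ≥ c > d > 0 with ad - bc > 0, the function g(x) = ln((a^x - b^x)/(c^x - d^x)), extended continuously at 0, is strictly convex on the real line. -/

import Mathlib

noncomputable def logMean (x y : ℝ) : ℝ := (x - y) / (Real.log x - Real.log y)


open Real Set Filter Topology

namespace StrictAux

noncomputable def F (s : ℝ) : ℝ := Real.log ((Real.exp s - 1) / s)
noncomputable def Fp (s : ℝ) : ℝ := Real.exp s / (Real.exp s - 1) - 1 / s
noncomputable def Fpp (s : ℝ) : ℝ := 1 / s ^ 2 - Real.exp s / (Real.exp s - 1) ^ 2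
noncomputable def phi (s : ℝ) : ℝ := s ^ 2 * Real.exp s / (Real.exp s - 1) ^ 2

lemma expm1_ne {s : ℝ} (hs : s ≠ 0) : Real.exp s - 1 ≠ 0 :=
  sub_ne_zero_of_ne fun h => hs ((Real.exp_eq_one_iff s).mp h)

lemma F_hasDeriv {s : ℝ} (hs : s ≠ 0) : HasDerivAt F (Fp s) s := by
  have h1 : HasDerivAt (fun t : ℝ => (Real.exp t - 1) / t)
      ((Real.exp s * s - (Real.exp s - 1) * 1) / s ^ 2) s :=
    ((Real.hasDerivAt_exp s).sub_const 1).div (hasDerivAt_id s) hs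
  have h2 : (Real.exp s - 1) / s ≠ 0 := div_ne_zero (expm1_ne hs) hs
  have h3 : HasDerivAt F (((Real.exp s * s - (Real.exp s - 1) * 1) / s ^ 2) /
      ((Real.exp s - 1) / s)) s := h1.log h2
  convert h3 using 1
  unfold Fp
  have := expm1_ne hs
  field_simp

lemma Fp_hasDeriv {s : ℝ} (hs : s ≠ 0) : HasDerivAt Fp (Fpp s) s := by
  have h1 : HasDerivAt (fun t : ℝ => Real.exp t / (Real.exp t - 1))
      ((Real.exp s * (Real.exp s - 1) - Real.exp s * Real.exp s) / (Real.exp s - 1) ^ 2) s :=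
    (Real.hasDerivAt_exp s).div ((Real.hasDerivAt_exp s).sub_const 1) (expm1_ne hs)
  have h2 : HasDerivAt (fun t : ℝ => 1 / t) (-(1 / s ^ 2)) s := by
    simpa [one_div] using hasDerivAt_inv hs
  have h3 : HasDerivAt Fp ((Real.exp s * (Real.exp s - 1) - Real.exp s * Real.exp s) /
      (Real.exp s - 1) ^ 2 - -(1 / s ^ 2)) s := h1.sub h2
  convert h3 using 1
  unfold Fpp
  have := expm1_ne hs
  field_simp
  ring

lemma F_cont0 : ContinuousAt F 0 := by
  have h1 : Tendsto (slope Real.exp 0) (𝓝[≠] (0:ℝ)) (𝓝 1) := by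
    have := hasDerivAt_iff_tendsto_slope.mp (Real.hasDerivAt_exp 0)
    simpa using this
  have h1' : Tendsto (fun t : ℝ => (Real.exp t - 1) / t) (𝓝[≠] (0:ℝ)) (𝓝 1) := by
    refine h1.congr fun t => ?_
    simp [slope_def_field]
  have h2 : Tendsto F (𝓝[≠] (0:ℝ)) (𝓝 0) := by
    have hlog : ContinuousAt Real.log 1 := Real.continuousAt_log one_ne_zero
    have := (hlog.tendsto.mono_left (le_refl _)).comp h1'
    rw [show F = Real.log ∘ fun t : ℝ => (Real.exp t - 1) / t from rfl]
    simpa [Real.log_one] using this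
  have h3 : Tendsto F (pure (0:ℝ)) (𝓝 0) := by
    have : F 0 = 0 := by simp [F]
    simpa [this] using tendsto_pure_nhds F 0
  have h4 : Tendsto F (𝓝 (0:ℝ)) (𝓝 0) := by
    have h5 : Tendsto F (𝓝[≠] (0:ℝ) ⊔ pure 0) (𝓝 0) := h2.sup h3
    rwa [nhdsNE_sup_pure] at h5
  have hF0 : F 0 = 0 := by simp [F]
  rw [ContinuousAt, hF0]
  exact h4


lemma key_ineq {s : ℝ} (hs : 0 < s) : (2 - s) * Real.exp s < 2 + s := by
  have h1 : StrictMonoOn (fun t : ℝ => 1 - (1 - t) * Real.exp t) (Ici 0) := by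
    apply strictMonoOn_of_deriv_pos (convex_Ici 0)
    · fun_prop
    · intro t ht
      rw [interior_Ici] at ht
      have hd : HasDerivAt (fun t : ℝ => 1 - (1 - t) * Real.exp t) (t * Real.exp t) t := by
        have h0 : HasDerivAt (fun t : ℝ => 1 - (1 - t) * Real.exp t)
            (-((-1) * Real.exp t + (1 - t) * Real.exp t)) t :=
          (((hasDerivAt_id t).const_sub 1).mul (Real.hasDerivAt_exp t)).const_sub 1
        convert h0 using 1
        ring
      rw [hd.deriv]
      exact mul_pos ht (Real.exp_pos t)
  have h2 : StrictMonoOn (fun t : ℝ => 2 + t - (2 - t) * Real.exp t) (Ici 0) := by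
    apply strictMonoOn_of_deriv_pos (convex_Ici 0)
    · fun_prop
    · intro t ht
      rw [interior_Ici] at ht
      have hd : HasDerivAt (fun t : ℝ => 2 + t - (2 - t) * Real.exp t)
          (1 - (1 - t) * Real.exp t) t := by
        have h0 : HasDerivAt (fun t : ℝ => 2 + t - (2 - t) * Real.exp t)
            ((0 + 1) - ((-1) * Real.exp t + (2 - t) * Real.exp t)) t :=
          ((hasDerivAt_const t (2:ℝ)).add (hasDerivAt_id t)).sub
            (((hasDerivAt_id t).const_sub 2).mul (Real.hasDerivAt_exp t))
        convert h0 using 1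
        ring
      rw [hd.deriv]
      have := h1 (self_mem_Ici) (mem_Ici.mpr (le_of_lt ht)) ht
      simpa using this
  have := h2 (self_mem_Ici) (mem_Ici.mpr (le_of_lt hs)) hs
  simp only [add_zero, sub_zero, Real.exp_zero, mul_one] at this
  linarith

lemma Fp_gt_half {s : ℝ} (hs : 0 < s) : 1 / 2 < Fp s := by
  have he : (0:ℝ) < Real.exp s - 1 := by
    have := Real.add_one_lt_exp (ne_of_gt hs)
    linarith
  have key := key_ineq hs
  have h4 : Fp s - 1 / 2 = (2 + s - (2 - s) * Real.exp s) / (2 * s * (Real.exp s - 1)) := by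
    unfold Fp
    field_simp
    ring
  have h5 : 0 < (2 + s - (2 - s) * Real.exp s) / (2 * s * (Real.exp s - 1)) :=
    div_pos (by linarith) (by positivity)
  linarith

lemma Fp_neg {s : ℝ} (hs : s ≠ 0) : Fp (-s) = 1 - Fp s := by
  have h1 := Real.exp_ne_zero s
  have h2 := expm1_ne hs
  have h4 : Real.exp (-s) - 1 ≠ 0 := expm1_ne (neg_ne_zero.mpr hs)
  unfold Fp
  field_simp
  rw [Real.exp_neg]
  field_simp
  ring

lemma sinh_div_strictMono : StrictMonoOn (fun u : ℝ => Real.sinh u / u) (Ioi 0) := by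
  apply strictMonoOn_of_deriv_pos (convex_Ioi 0)
  · exact Real.continuous_sinh.continuousOn.div continuousOn_id fun x hx => ne_of_gt hx
  · intro u hu
    rw [interior_Ioi] at hu
    have hu0 : u ≠ 0 := ne_of_gt hu
    have hd : HasDerivAt (fun u : ℝ => Real.sinh u / u)
        ((Real.cosh u * u - Real.sinh u * 1) / u ^ 2) u :=
      (Real.hasDerivAt_sinh u).div (hasDerivAt_id u) hu0
    rw [hd.deriv]
    have hmono : StrictMonoOn (fun v : ℝ => Real.cosh v * v - Real.sinh v) (Ici 0) := by
      apply strictMonoOn_of_deriv_pos (convex_Ici 0)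
      · fun_prop
      · intro v hv
        rw [interior_Ici] at hv
        have hdv : HasDerivAt (fun v : ℝ => Real.cosh v * v - Real.sinh v)
            (v * Real.sinh v) v := by
          have h0 : HasDerivAt (fun v : ℝ => Real.cosh v * v - Real.sinh v)
              ((Real.sinh v * v + Real.cosh v * 1) - Real.cosh v) v :=
            ((Real.hasDerivAt_cosh v).mul (hasDerivAt_id v)).sub (Real.hasDerivAt_sinh v)
          convert h0 using 1
          ring
        rw [hdv.deriv]
        exact mul_pos hv (Real.sinh_pos_iff.mpr hv)
    have h0 := hmono (self_mem_Ici) (mem_Ici.mpr (le_of_lt hu)) hu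
    simp only [Real.cosh_zero, Real.sinh_zero, mul_zero, zero_mul, sub_zero] at h0
    have hnum : 0 < Real.cosh u * u - Real.sinh u * 1 := by
      rw [mul_one]
      simpa using h0
    exact div_pos hnum (by positivity)


lemma phi_eq {s : ℝ} (hs : s ≠ 0) :
    phi s = (|s| / 2) ^ 2 / Real.sinh (|s| / 2) ^ 2 := by
  have hdbl : Real.exp (s / 2) * Real.exp (s / 2) = Real.exp s := by
    rw [← Real.exp_add]
    norm_num
  have hmix : Real.exp (s / 2) * Real.exp (-(s / 2)) = 1 := by
    rw [← Real.exp_add]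
    simp
  have key : Real.exp s - 1 = 2 * Real.exp (s / 2) * Real.sinh (s / 2) := by
    rw [Real.sinh_eq]
    linear_combination (-1 : ℝ) * hdbl + hmix
  have hs2 : s / 2 ≠ 0 := div_ne_zero hs two_ne_zero
  have hsinh : Real.sinh (s / 2) ≠ 0 := Real.sinh_ne_zero.mpr hs2
  have hexp := Real.exp_ne_zero (s / 2)
  have h2 : phi s = (s / 2) ^ 2 / Real.sinh (s / 2) ^ 2 := by
    unfold phi
    rw [key]
    field_simp
    linear_combination (-1 : ℝ) * hdbl
  rcases abs_cases s with ⟨h, _⟩ | ⟨h, _⟩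
  · rw [h2, h]
  · rw [h2, h, neg_div, Real.sinh_neg]
    ring

lemma phi_lt {A B : ℝ} (hB : B ≠ 0) (h : |B| < |A|) : phi A < phi B := by
  have hA : A ≠ 0 := by
    intro h0
    rw [h0, abs_zero] at h
    exact absurd h (not_lt.mpr (abs_nonneg B))
  rw [phi_eq hA, phi_eq hB]
  have hu : 0 < |B| / 2 := by
    have := abs_pos.mpr hB
    linarith
  have huv : |B| / 2 < |A| / 2 := by linarith
  have hv : 0 < |A| / 2 := lt_trans hu huv
  have hmono := sinh_div_strictMono (mem_Ioi.mpr hu) (mem_Ioi.mpr hv) huv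
  have hsu : 0 < Real.sinh (|B| / 2) := Real.sinh_pos_iff.mpr hu
  have hsv : 0 < Real.sinh (|A| / 2) := Real.sinh_pos_iff.mpr hv
  rw [div_lt_div_iff₀ hu hv] at hmono
  rw [div_lt_div_iff₀ (by positivity) (by positivity)]
  have h2 : (Real.sinh (|B| / 2) * (|A| / 2)) ^ 2 < (Real.sinh (|A| / 2) * (|B| / 2)) ^ 2 :=
    pow_lt_pow_left₀ hmono (by positivity) (by norm_num)
  calc (|A| / 2) ^ 2 * Real.sinh (|B| / 2) ^ 2 = (Real.sinh (|B| / 2) * (|A| / 2)) ^ 2 := by ring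
    _ < (Real.sinh (|A| / 2) * (|B| / 2)) ^ 2 := h2
    _ = (|B| / 2) ^ 2 * Real.sinh (|A| / 2) ^ 2 := by ring

lemma phi_lt_one {s : ℝ} (hs : s ≠ 0) : phi s < 1 := by
  rw [phi_eq hs]
  have hu : 0 < |s| / 2 := by
    have := abs_pos.mpr hs
    linarith
  have hlt : |s| / 2 < Real.sinh (|s| / 2) := Real.self_lt_sinh_iff.mpr hu
  rw [div_lt_one (by positivity)]
  exact pow_lt_pow_left₀ hlt (by positivity) (by norm_num)

lemma Fpp_eq {s : ℝ} (hs : s ≠ 0) : Fpp s = (1 - phi s) / s ^ 2 := by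
  unfold Fpp phi
  rw [sub_div]
  congr 1
  have h2 : s ^ 2 ≠ 0 := pow_ne_zero 2 hs
  rw [mul_div_assoc, mul_div_right_comm, div_self h2, one_mul]

lemma Fpp_pos {s : ℝ} (hs : s ≠ 0) : 0 < Fpp s := by
  rw [Fpp_eq hs]
  exact div_pos (by linarith [phi_lt_one hs]) (by positivity)

lemma Fp_strictMonoOn : StrictMonoOn Fp (Ioi 0) := by
  apply strictMonoOn_of_deriv_pos (convex_Ioi 0)
  · intro s hs
    exact (Fp_hasDeriv (ne_of_gt hs)).continuousAt.continuousWithinAt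
  · intro s hs
    rw [interior_Ioi] at hs
    rw [(Fp_hasDeriv (ne_of_gt hs)).deriv]
    exact Fpp_pos (ne_of_gt hs)


lemma K_aux {A B : ℝ} (hB : 0 < B) (hAB : B < A) :
    StrictConvexOn ℝ Set.univ (fun x : ℝ => F (A * x) - F (B * x)) := by
  have hA : 0 < A := lt_trans hB hAB
  set K : ℝ → ℝ := fun x => F (A * x) - F (B * x) with hK
  set Kp : ℝ → ℝ := fun x => A * Fp (A * x) - B * Fp (B * x) with hKp
  -- derivatives away from 0
  have hKd : ∀ x : ℝ, x ≠ 0 → HasDerivAt K (Kp x) x := by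
    intro x hx
    have hinA : HasDerivAt (fun y : ℝ => A * y) A x := by
      simpa using (hasDerivAt_id x).const_mul A
    have hinB : HasDerivAt (fun y : ℝ => B * y) B x := by
      simpa using (hasDerivAt_id x).const_mul B
    have h1 : HasDerivAt (fun x : ℝ => F (A * x)) (Fp (A * x) * A) x :=
      (F_hasDeriv (mul_ne_zero hA.ne' hx)).comp x hinA
    have h2 : HasDerivAt (fun x : ℝ => F (B * x)) (Fp (B * x) * B) x :=
      (F_hasDeriv (mul_ne_zero hB.ne' hx)).comp x hinB
    have h3 : HasDerivAt (fun x : ℝ => F (A * x) - F (B * x))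
        (Fp (A * x) * A - Fp (B * x) * B) x := h1.sub h2
    rw [hKp]
    convert h3 using 1
    beta_reduce
    ring
  have hKpd : ∀ x : ℝ, x ≠ 0 →
      HasDerivAt Kp (A ^ 2 * Fpp (A * x) - B ^ 2 * Fpp (B * x)) x := by
    intro x hx
    have hinA : HasDerivAt (fun y : ℝ => A * y) A x := by
      simpa using (hasDerivAt_id x).const_mul A
    have hinB : HasDerivAt (fun y : ℝ => B * y) B x := by
      simpa using (hasDerivAt_id x).const_mul B
    have h1 : HasDerivAt (fun x : ℝ => A * Fp (A * x)) (A * (Fpp (A * x) * A)) x :=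
      ((Fp_hasDeriv (mul_ne_zero hA.ne' hx)).comp x hinA).const_mul A
    have h2 : HasDerivAt (fun x : ℝ => B * Fp (B * x)) (B * (Fpp (B * x) * B)) x :=
      ((Fp_hasDeriv (mul_ne_zero hB.ne' hx)).comp x hinB).const_mul B
    have h3 : HasDerivAt (fun x : ℝ => A * Fp (A * x) - B * Fp (B * x))
        (A * (Fpp (A * x) * A) - B * (Fpp (B * x) * B)) x := h1.sub h2
    rw [hKp]
    convert h3 using 1
    beta_reduce
    ring
  -- continuity of K
  have hKc : Continuous K := by
    rw [continuous_iff_continuousAt]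
    intro x
    rcases eq_or_ne x 0 with rfl | hx
    · have c1 : ContinuousAt (fun x : ℝ => F (A * x)) 0 := by
        have h0 : ContinuousAt F (A * 0) := by rw [mul_zero]; exact F_cont0
        exact h0.comp (continuous_const.mul continuous_id).continuousAt
      have c2 : ContinuousAt (fun x : ℝ => F (B * x)) 0 := by
        have h0 : ContinuousAt F (B * 0) := by rw [mul_zero]; exact F_cont0
        exact h0.comp (continuous_const.mul continuous_id).continuousAt
      exact c1.sub c2
    · exact (hKd x hx).continuousAt
  -- second derivative positivity
  have hKppos : ∀ t : ℝ, t ≠ 0 → 0 < A ^ 2 * Fpp (A * t) - B ^ 2 * Fpp (B * t) := by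
    intro t ht
    have e1 : A ^ 2 * Fpp (A * t) = (1 - phi (A * t)) / t ^ 2 := by
      rw [Fpp_eq (mul_ne_zero hA.ne' ht)]
      have h2 : t ^ 2 ≠ 0 := pow_ne_zero 2 ht
      have h3 : A ^ 2 ≠ 0 := pow_ne_zero 2 hA.ne'
      field_simp
    have e2 : B ^ 2 * Fpp (B * t) = (1 - phi (B * t)) / t ^ 2 := by
      rw [Fpp_eq (mul_ne_zero hB.ne' ht)]
      have h2 : t ^ 2 ≠ 0 := pow_ne_zero 2 ht
      have h3 : B ^ 2 ≠ 0 := pow_ne_zero 2 hB.ne'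
      field_simp
    have h3 : phi (A * t) < phi (B * t) := by
      apply phi_lt (mul_ne_zero hB.ne' ht)
      rw [abs_mul, abs_mul, abs_of_pos hB, abs_of_pos hA]
      exact mul_lt_mul_of_pos_right hAB (abs_pos.mpr ht)
    rw [e1, e2, div_sub_div_same]
    exact div_pos (by linarith) (by positivity)
  -- Kp monotone on each side, and derivative bounds
  have hKpm : ∀ x : ℝ, 0 < x → (A - B) / 2 < Kp x := by
    intro x hx
    have h1 : 1 / 2 < Fp (B * x) := Fp_gt_half (mul_pos hB hx)
    have h2 : Fp (B * x) < Fp (A * x) :=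
      Fp_strictMonoOn (mem_Ioi.mpr (mul_pos hB hx)) (mem_Ioi.mpr (mul_pos hA hx))
        (mul_lt_mul_of_pos_right hAB hx)
    rw [hKp]
    nlinarith [mul_pos (sub_pos.mpr hAB) (sub_pos.mpr h2)]
  have hKpm' : ∀ x : ℝ, x < 0 → Kp x < (A - B) / 2 := by
    intro x hx
    have h1 := hKpm (-x) (by linarith)
    have e1 : Fp (A * x) = 1 - Fp (-(A * x)) := by
      have h0 := Fp_neg (s := A * (-x)) (mul_ne_zero hA.ne' (by intro h0; apply absurd h0; simpa using ne_of_lt hx))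
      simp only [mul_neg, neg_neg] at h0
      exact h0
    have e2 : Fp (B * x) = 1 - Fp (-(B * x)) := by
      have h0 := Fp_neg (s := B * (-x)) (mul_ne_zero hB.ne' (by intro h0; apply absurd h0; simpa using ne_of_lt hx))
      simp only [mul_neg, neg_neg] at h0
      exact h0
    simp only [hKp, mul_neg] at h1 ⊢
    rw [e1, e2]
    linarith
  -- slope bounds around 0 via MVT
  have slopeL : ∀ x : ℝ, x < 0 → (K 0 - K x) / (0 - x) < (A - B) / 2 := by
    intro x hx
    obtain ⟨c, hc, hceq⟩ := exists_hasDerivAt_eq_slope K Kp hx hKc.continuousOn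
      (fun u hu => hKd u (ne_of_lt hu.2))
    rw [← hceq]
    exact hKpm' c hc.2
  have slopeR : ∀ z : ℝ, 0 < z → (A - B) / 2 < (K z - K 0) / (z - 0) := by
    intro z hz
    obtain ⟨c, hc, hceq⟩ := exists_hasDerivAt_eq_slope K Kp hz hKc.continuousOn
      (fun u hu => hKd u (ne_of_gt hu.1))
    rw [← hceq]
    exact hKpm c hc.1
  -- strict convexity on each closed half-line
  have hKpmono : StrictMonoOn Kp (Ioi 0) := by
    apply strictMonoOn_of_deriv_pos (convex_Ioi 0)
    · intro p hp
      exact (hKpd p (ne_of_gt hp)).continuousAt.continuousWithinAt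
    · intro p hp
      rw [interior_Ioi] at hp
      rw [(hKpd p (ne_of_gt hp)).deriv]
      exact hKppos p (ne_of_gt hp)
  have hKpmono' : StrictMonoOn Kp (Iio 0) := by
    apply strictMonoOn_of_deriv_pos (convex_Iio 0)
    · intro p hp
      exact (hKpd p (ne_of_lt hp)).continuousAt.continuousWithinAt
    · intro p hp
      rw [interior_Iio] at hp
      rw [(hKpd p (ne_of_lt hp)).deriv]
      exact hKppos p (ne_of_lt hp)
  have hIci : StrictConvexOn ℝ (Ici (0:ℝ)) K := by
    apply StrictMonoOn.strictConvexOn_of_deriv (convex_Ici 0) hKc.continuousOn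
    rw [interior_Ici]
    intro p hp q hq hpq
    rw [(hKd p (ne_of_gt hp)).deriv, (hKd q (ne_of_gt hq)).deriv]
    exact hKpmono hp hq hpq
  have hIic : StrictConvexOn ℝ (Iic (0:ℝ)) K := by
    apply StrictMonoOn.strictConvexOn_of_deriv (convex_Iic 0) hKc.continuousOn
    rw [interior_Iic]
    intro p hp q hq hpq
    rw [(hKd p (ne_of_lt hp)).deriv, (hKd q (ne_of_lt hq)).deriv]
    exact hKpmono' hp hq hpq
  have hIciS := (strictConvexOn_iff_slope_strict_mono_adjacent.mp hIci).2
  have hIicS := (strictConvexOn_iff_slope_strict_mono_adjacent.mp hIic).2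
  -- glue
  rw [strictConvexOn_iff_slope_strict_mono_adjacent]
  refine ⟨convex_univ, ?_⟩
  intro x y z _ _ hxy hyz
  by_cases hx0 : 0 ≤ x
  · exact hIciS (mem_Ici.mpr hx0) (mem_Ici.mpr (by linarith)) hxy hyz
  push_neg at hx0
  by_cases hz0 : z ≤ 0
  · exact hIicS (mem_Iic.mpr (by linarith)) (mem_Iic.mpr hz0) hxy hyz
  push_neg at hz0
  rcases lt_trichotomy y 0 with hy | hy | hy
  · -- y < 0
    have s1 : (K y - K x) / (y - x) < (K 0 - K y) / (0 - y) :=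
      hIicS (mem_Iic.mpr (le_of_lt hx0)) (mem_Iic.mpr le_rfl) hxy hy
    have s2 : (K 0 - K y) / (0 - y) < (K z - K 0) / (z - 0) :=
      lt_trans (slopeL y hy) (slopeR z hz0)
    have s3 : (K 0 - K y) / (0 - y) < (K z - K y) / (z - y) := by
      rw [div_lt_div_iff₀ (by linarith) (by linarith)] at s2 ⊢
      nlinarith [s2]
    exact lt_trans s1 s3
  · -- y = 0
    subst hy
    exact lt_trans (slopeL x hx0) (slopeR z hz0)
  · -- y > 0
    have s2 : (K z - K y) / (z - y) > (K y - K 0) / (y - 0) :=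
      hIciS (mem_Ici.mpr le_rfl) (mem_Ici.mpr (by linarith)) hy hyz
    have s1 : (K 0 - K x) / (0 - x) < (K y - K 0) / (y - 0) :=
      lt_trans (slopeL x hx0) (slopeR y hy)
    have s3 : (K y - K x) / (y - x) < (K y - K 0) / (y - 0) := by
      rw [div_lt_div_iff₀ (by linarith) (by linarith)] at s1 ⊢
      nlinarith [s1]
    exact lt_trans s3 s2

end StrictAux

theorem stmt1 (a b c d : ℝ) (hab : a > b) (hbc : b ≥ c) (hcd : c > d) (hd : d > 0)
    (h : a * d - b * c > 0) :
    StrictConvexOn ℝ Set.univ (fun x : ℝ =>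
      if x = 0 then Real.log (((a - b) / (c - d)) * (logMean c d / logMean a b))
      else Real.log ((a ^ x - b ^ x) / (c ^ x - d ^ x))) := by
  have hc : 0 < c := lt_trans hd hcd
  have hb : 0 < b := lt_of_lt_of_le hc hbc
  have ha : 0 < a := lt_trans hb hab
  have hα0 : 0 < Real.log a - Real.log b := sub_pos.mpr (Real.log_lt_log hb hab)
  have hβ0 : 0 < Real.log c - Real.log d := sub_pos.mpr (Real.log_lt_log hd hcd)
  have hβα : Real.log c - Real.log d < Real.log a - Real.log b := by
    have h1 : Real.log (b * c) < Real.log (a * d) :=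
      Real.log_lt_log (by positivity) (by nlinarith)
    rw [Real.log_mul hb.ne' hc.ne', Real.log_mul ha.ne' hd.ne'] at h1
    linarith
  have hbd : (0:ℝ) ≤ Real.log b - Real.log d :=
    le_of_lt (sub_pos.mpr (Real.log_lt_log hd (lt_of_lt_of_le hcd hbc)))
  have hmain := StrictAux.K_aux hβ0 hβα
  have hlin : ConvexOn ℝ Set.univ (fun x : ℝ => (Real.log b - Real.log d) * x) := by
    simpa [smul_eq_mul] using (convexOn_id (convex_univ : Convex ℝ (Set.univ : Set ℝ))).smul hbd
  have haff : ConvexOn ℝ Set.univ (fun x : ℝ =>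
      (Real.log b - Real.log d) * x +
        (Real.log (Real.log a - Real.log b) - Real.log (Real.log c - Real.log d))) :=
    hlin.add (convexOn_const _ convex_univ)
  have hsum := haff.add_strictConvexOn hmain
  have hfun : (fun x : ℝ =>
      if x = 0 then Real.log (((a - b) / (c - d)) * (logMean c d / logMean a b))
      else Real.log ((a ^ x - b ^ x) / (c ^ x - d ^ x))) =
      fun x : ℝ => ((Real.log b - Real.log d) * x +
        (Real.log (Real.log a - Real.log b) - Real.log (Real.log c - Real.log d))) +
        (StrictAux.F ((Real.log a - Real.log b) * x) -
          StrictAux.F ((Real.log c - Real.log d) * x)) := by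
    funext x
    by_cases hx : x = 0
    · subst hx
      simp only [show ((0:ℝ) = 0) = True by simp, if_true, mul_zero]
      have hF0 : StrictAux.F 0 = 0 := by simp [StrictAux.F]
      rw [hF0]
      have hab' : a - b ≠ 0 := by intro h0; nlinarith
      have hcd' : c - d ≠ 0 := by intro h0; nlinarith
      have harg : (a - b) / (c - d) * (logMean c d / logMean a b) =
          (Real.log a - Real.log b) / (Real.log c - Real.log d) := by
        unfold logMean
        field_simp
      rw [harg, Real.log_div hα0.ne' hβ0.ne']
      ring
    · simp only [if_neg hx]
      have hax : a ^ x = Real.exp (Real.log a * x) := Real.rpow_def_of_pos ha x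
      have hbx : b ^ x = Real.exp (Real.log b * x) := Real.rpow_def_of_pos hb x
      have hcx : c ^ x = Real.exp (Real.log c * x) := Real.rpow_def_of_pos hc x
      have hdx : d ^ x = Real.exp (Real.log d * x) := Real.rpow_def_of_pos hd x
      have h1 : Real.exp ((Real.log a - Real.log b) * x) - 1 ≠ 0 :=
        StrictAux.expm1_ne (mul_ne_zero hα0.ne' hx)
      have h2 : Real.exp ((Real.log c - Real.log d) * x) - 1 ≠ 0 :=
        StrictAux.expm1_ne (mul_ne_zero hβ0.ne' hx)
      have hnum : a ^ x - b ^ x =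
          Real.exp (Real.log b * x) * (Real.exp ((Real.log a - Real.log b) * x) - 1) := by
        rw [hax, hbx, mul_sub, ← Real.exp_add, mul_one]
        congr 2
        ring
      have hden : c ^ x - d ^ x =
          Real.exp (Real.log d * x) * (Real.exp ((Real.log c - Real.log d) * x) - 1) := by
        rw [hcx, hdx, mul_sub, ← Real.exp_add, mul_one]
        congr 2
        ring
      have hF1 : StrictAux.F ((Real.log a - Real.log b) * x) =
          Real.log (Real.exp ((Real.log a - Real.log b) * x) - 1) -
            Real.log (Real.log a - Real.log b) - Real.log x := by
        unfold StrictAux.F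
        rw [Real.log_div h1 (mul_ne_zero hα0.ne' hx), Real.log_mul hα0.ne' hx]
        ring
      have hF2 : StrictAux.F ((Real.log c - Real.log d) * x) =
          Real.log (Real.exp ((Real.log c - Real.log d) * x) - 1) -
            Real.log (Real.log c - Real.log d) - Real.log x := by
        unfold StrictAux.F
        rw [Real.log_div h2 (mul_ne_zero hβ0.ne' hx), Real.log_mul hβ0.ne' hx]
        ring
      rw [hnum, hden,
        Real.log_div (mul_ne_zero (Real.exp_ne_zero _) h1) (mul_ne_zero (Real.exp_ne_zero _) h2),
        Real.log_mul (Real.exp_ne_zero _) h1, Real.log_mul (Real.exp_ne_zero _) h2,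
        Real.log_exp, Real.log_exp, hF1, hF2]
      ring
  rw [hfun]
  exact hsum
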